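/- For n ≥ 2 and k ≥ 2, a_{n+1,k,ℓ} ≤ a_{n,k,ℓ} + 2^k·n^{k-2}, where a_{N,k,ℓ} is the minimum number of ℓ-rooks (ℓ ≥ 2) needed to cover {0,...,N-1}^k. -/

import Mathlib

/-- An ℓ-rook in `{0,...,n-1}^k`: a point together with a set of chosen coordinate
directions. -/
abbrev Rook (n k : ℕ) := (Fin k → Fin n) × Finset (Fin k)

/-- A rook covers itself and every point differing from it in exactly one of its
chosen coordinates. -/
def Rook.covers {n k : ℕ} (R : Rook n k) (q : Fin k → Fin n) : Prop :=
  q = R.1 ∨ ∃ i ∈ R.2, q i ≠ R.1 i ∧ ∀ j, j ≠ i → q j = R.1 j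

/-- `S` is a covering of the hypercube by ℓ-rooks. -/
def IsCover (n k ℓ : ℕ) (S : Finset (Rook n k)) : Prop :=
  (∀ R ∈ S, R.2.card = ℓ) ∧ ∀ q : Fin k → Fin n, ∃ R ∈ S, R.covers q

/-- `aval n k ℓ` : the minimum number of ℓ-rooks needed to cover `{0,...,n-1}^k`. -/
noncomputable def aval (n k ℓ : ℕ) : ℕ :=
  sInf {s | ∃ S : Finset (Rook n k), IsCover n k ℓ S ∧ S.card = s}

lemma aux_pow : ∀ m : ℕ, (m + 2) * 3 ^ m ≤ 4 ^ (m + 1)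
  | 0 => by norm_num
  | 1 => by norm_num
  | (m + 2) => by
    have ih := aux_pow (m + 1)
    have h3 : (0:ℕ) < 3 ^ (m + 1) := pow_pos (by norm_num) _
    calc (m + 2 + 2) * 3 ^ (m + 2) = 3 * ((m + 4) * 3 ^ (m + 1)) := by ring
      _ ≤ 4 * ((m + 3) * 3 ^ (m + 1)) := by nlinarith
      _ ≤ 4 * 4 ^ (m + 2) := by
          have : (m + 1 + 2) * 3 ^ (m + 1) ≤ 4 ^ (m + 1 + 1) := ih
          nlinarith
      _ = 4 ^ (m + 2 + 1) := by ring

lemma arith_bound (n k : ℕ) (hn : 2 ≤ n) (hk : 2 ≤ k) :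
    k * (n + 1) ^ (k - 2) ≤ 2 ^ k * n ^ (k - 2) := by
  obtain ⟨m, rfl⟩ : ∃ m, k = m + 2 := ⟨k - 2, by omega⟩
  have h2 : (0:ℕ) < 2 ^ m := pow_pos (by norm_num) m
  have key : 2 ^ m * ((m + 2) * (n + 1) ^ m) ≤ 2 ^ m * (2 ^ (m + 2) * n ^ m) := by
    calc 2 ^ m * ((m + 2) * (n + 1) ^ m) = (m + 2) * (2 * (n + 1)) ^ m := by
          rw [mul_pow]; ring
      _ ≤ (m + 2) * (3 * n) ^ m := by
          apply Nat.mul_le_mul_left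
          apply Nat.pow_le_pow_left
          omega
      _ = (m + 2) * 3 ^ m * n ^ m := by rw [mul_pow]; ring
      _ ≤ 4 ^ (m + 1) * n ^ m := Nat.mul_le_mul_right _ (aux_pow m)
      _ = 2 ^ m * (2 ^ (m + 2) * n ^ m) := by
          rw [show (4:ℕ) = 2 ^ 2 by norm_num, ← pow_mul]
          rw [← mul_assoc, ← pow_add]
          ring_nf
  have := Nat.le_of_mul_le_mul_left key h2
  simpa using this

theorem aval_succ (n k ℓ : ℕ) (hn : 2 ≤ n) (hk : 2 ≤ k) (hℓ : 2 ≤ ℓ) (hlk : ℓ ≤ k) :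
    aval (n + 1) k ℓ ≤ aval n k ℓ + 2 ^ k * n ^ (k - 2) := by
  classical
  -- a direction set of size ℓ
  obtain ⟨D₀, -, hD₀⟩ := Finset.exists_subset_card_eq (s := (Finset.univ : Finset (Fin k))) (n := ℓ)
    (by simpa using hlk)
  -- the set defining `aval n k ℓ` is nonempty
  have hne : {s | ∃ S : Finset (Rook n k), IsCover n k ℓ S ∧ S.card = s}.Nonempty := by
    refine ⟨_, Finset.univ.image (fun p : Fin k → Fin n => (p, D₀)), ⟨?_, ?_⟩, rfl⟩
    · intro R hR
      simp only [Finset.mem_image, Finset.mem_univ, true_and] at hR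
      obtain ⟨p, rfl⟩ := hR
      exact hD₀
    · intro q
      exact ⟨(q, D₀), Finset.mem_image_of_mem _ (Finset.mem_univ q), Or.inl rfl⟩
  obtain ⟨S₀, hS₀, hcard₀⟩ := Nat.sInf_mem hne
  -- for each i, another coordinate j i ≠ i
  have h0 : 0 < k := by omega
  have h1 : 1 < k := by omega
  set j : Fin k → Fin k := fun i => if (i : ℕ) = 0 then ⟨1, h1⟩ else ⟨0, h0⟩ with hjdef
  have hj : ∀ i, j i ≠ i := by
    intro i
    simp only [hjdef]
    split <;> (intro h; apply_fun (Fin.val) at h; simp_all)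
  -- for each i, a direction set of size ℓ containing j i
  have hD : ∀ i : Fin k, ∃ D : Finset (Fin k), j i ∈ D ∧ D.card = ℓ := by
    intro i
    obtain ⟨u, hsu, -, hu⟩ := Finset.exists_subsuperset_card_eq (n := ℓ)
      (Finset.subset_univ {j i}) (by rw [Finset.card_singleton]; omega) (by simpa using hlk)
    exact ⟨u, hsu (Finset.mem_singleton_self _), hu⟩
  choose D hDmem hDcard using hD
  -- embedding of rooks
  set emb : Rook n k → Rook (n + 1) k :=
    fun R => (fun m => (R.1 m).castSucc, R.2) with hemb
  -- boundary rooks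
  set B : Finset (Rook (n + 1) k) := Finset.univ.biUnion (fun i : Fin k =>
    (Finset.univ.filter
      (fun f : Fin k → Fin (n + 1) => f i = Fin.last n ∧ f (j i) = 0)).image
      (fun f => ((f, D i) : Rook (n + 1) k))) with hB
  set S' : Finset (Rook (n + 1) k) := S₀.image emb ∪ B with hS'
  -- S' is a cover
  have hcover : IsCover (n + 1) k ℓ S' := by
    constructor
    · intro R hR
      rw [hS', Finset.mem_union] at hR
      rcases hR with hR | hR
      · obtain ⟨R₀, hR₀, rfl⟩ := Finset.mem_image.1 hR
        exact hS₀.1 R₀ hR₀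
      · rw [hB] at hR
        obtain ⟨i, -, hR⟩ := Finset.mem_biUnion.1 hR
        obtain ⟨f, -, rfl⟩ := Finset.mem_image.1 hR
        exact hDcard i
    · intro q
      by_cases hq : ∃ i, q i = Fin.last n
      · obtain ⟨i, hi⟩ := hq
        refine ⟨(Function.update q (j i) 0, D i), ?_, ?_⟩
        · rw [hS']
          apply Finset.mem_union_right
          rw [hB]
          apply Finset.mem_biUnion.2
          refine ⟨i, Finset.mem_univ i, Finset.mem_image.2 ⟨_, ?_, rfl⟩⟩
          refine Finset.mem_filter.2 ⟨Finset.mem_univ _, ?_, ?_⟩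
          · rw [Function.update_of_ne (Ne.symm (hj i))]; exact hi
          · exact Function.update_self _ _ _
        · by_cases hq0 : q (j i) = 0
          · left
            funext m
            show q m = Function.update q (j i) 0 m
            by_cases hm : m = j i
            · subst hm; rw [Function.update_self]; exact hq0
            · rw [Function.update_of_ne hm]
          · right
            refine ⟨j i, hDmem i, ?_, ?_⟩
            · simpa [Function.update_self] using hq0
            · intro m hm
              show q m = Function.update q (j i) 0 m
              rw [Function.update_of_ne hm]
      · push_neg at hq
        have hlt : ∀ m, (q m : ℕ) < n := by
          intro m
          have h1 : (q m : ℕ) < n + 1 := (q m).isLt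
          have h2 : (q m : ℕ) ≠ n := fun h => hq m (Fin.ext h)
          omega
        set q₀ : Fin k → Fin n := fun m => ⟨q m, hlt m⟩ with hq₀
        obtain ⟨R, hR, hcov⟩ := hS₀.2 q₀
        refine ⟨emb R, Finset.mem_union_left _ (Finset.mem_image_of_mem _ hR), ?_⟩
        have hqe : ∀ m, q m = ((q₀ m).castSucc) := by
          intro m; apply Fin.ext; simp [hq₀]
        rcases hcov with hcov | ⟨i, hiD, hne', hall⟩
        · left
          funext m
          rw [hqe m, congrFun hcov m]
        · right
          refine ⟨i, hiD, ?_, ?_⟩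
          · rw [hqe i]
            intro h
            apply hne'
            apply Fin.ext
            have := congrArg Fin.val h
            simpa [hemb] using this
          · intro m hm
            rw [hqe m, hall m hm]
  -- cardinality bounds
  have hBcard : B.card ≤ k * (n + 1) ^ (k - 2) := by
    rw [hB]
    refine le_trans (Finset.card_biUnion_le) ?_
    have hper : ∀ i : Fin k,
        ((Finset.univ.filter
          (fun f : Fin k → Fin (n + 1) => f i = Fin.last n ∧ f (j i) = 0)).image
          (fun f => ((f, D i) : Rook (n + 1) k))).card ≤ (n + 1) ^ (k - 2) := by
      intro i
      refine le_trans (Finset.card_image_le) ?_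
      set T : Finset (Fin k) := ({i, j i} : Finset (Fin k))ᶜ with hT
      have hTcard : T.card = k - 2 := by
        rw [hT, Finset.card_compl, Finset.card_pair (Ne.symm (hj i))]
        simp
      have hinj : ∀ f ∈ (Finset.univ.filter
          (fun f : Fin k → Fin (n + 1) => f i = Fin.last n ∧ f (j i) = 0)),
          ∀ g ∈ (Finset.univ.filter
          (fun f : Fin k → Fin (n + 1) => f i = Fin.last n ∧ f (j i) = 0)),
          (fun m : T => f m.1) = (fun m : T => g m.1) → f = g := by
        intro f hf g hg hfg
        rw [Finset.mem_filter] at hf hg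
        funext m
        by_cases hmi : m = i
        · subst hmi; rw [hf.2.1, hg.2.1]
        · by_cases hmj : m = j i
          · subst hmj; rw [hf.2.2, hg.2.2]
          · have hmT : m ∈ T := by
              rw [hT, Finset.mem_compl]
              simp [hmi, hmj]
            exact congrFun hfg ⟨m, hmT⟩
      have := Finset.card_le_card_of_injOn (fun f => (fun m : T => f m.1))
        (fun f _ => Finset.mem_univ (fun m : T => f m.1)) (fun f hf g hg h => hinj f hf g hg h)
      refine le_trans this ?_
      rw [Finset.card_univ, Fintype.card_fun, Fintype.card_fin, Fintype.card_coe, hTcard]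
    calc (Finset.univ : Finset (Fin k)).sum (fun i =>
        ((Finset.univ.filter
          (fun f : Fin k → Fin (n + 1) => f i = Fin.last n ∧ f (j i) = 0)).image
          (fun f => ((f, D i) : Rook (n + 1) k))).card)
        ≤ (Finset.univ : Finset (Fin k)).sum (fun _ => (n + 1) ^ (k - 2)) :=
          Finset.sum_le_sum (fun i _ => hper i)
      _ = k * (n + 1) ^ (k - 2) := by
          rw [Finset.sum_const, Finset.card_univ, Fintype.card_fin, smul_eq_mul]
  have hS'card : S'.card ≤ aval n k ℓ + k * (n + 1) ^ (k - 2) := by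
    calc S'.card ≤ (S₀.image emb).card + B.card := Finset.card_union_le _ _
      _ ≤ S₀.card + B.card := by
          exact Nat.add_le_add_right (Finset.card_image_le) _
      _ ≤ aval n k ℓ + k * (n + 1) ^ (k - 2) := by
          rw [hcard₀]; exact Nat.add_le_add_left hBcard _
  have hle : aval (n + 1) k ℓ ≤ S'.card := Nat.sInf_le ⟨S', hcover, rfl⟩
  calc aval (n + 1) k ℓ ≤ aval n k ℓ + k * (n + 1) ^ (k - 2) := le_trans hle hS'card
    _ ≤ aval n k ℓ + 2 ^ k * n ^ (k - 2) :=
        Nat.add_le_add_left (arith_bound n k hn hk) _
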